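/- Let (Ω, μ) be a probability space and let ε : Ω → ℝⁿ be an exchangeable random vector. Let R ∈ ℝⁿ have nonincreasing coordinates (R₁ ≥ ⋯ ≥ R_n), let σ be a permutation of {1,…,n}, and write R^σ for the vector with (R^σ)_i = R_{σ(i)}. Let P : ℝⁿ → ℝⁿ be a map such that for every v ∈ ℝⁿ, P v ∈ K_n and ‖v − P v‖ ≤ ‖v − w‖ for all w ∈ K_n. Let 1 ≤ k ≤ n and let U : ℝ → ℝ be a nondecreasing convex function; assume the integrands below are integrable. Then ∫ ∑_{i=1}^k U((P(R + ε ω)) i) dμ(ω) ≥ ∫ ∑_{i=1}^k U((P(R^σ + ε ω)) i) dμ(ω): in the Blind Case with quota k, reporting the true ranking maximizes the expected utility. -/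

import Mathlib

open MeasureTheory

noncomputable section

/-- The monotone (isotonic) cone of nonincreasing vectors in `ℝⁿ`. -/
def monoCone (n : ℕ) : Set (EuclideanSpace ℝ (Fin n)) :=
  {x | ∀ i j : Fin n, i ≤ j → x j ≤ x i}

/-- `p` is an isotonic projection of `y` onto the monotone cone. -/
def IsIsoProj {n : ℕ} (y p : EuclideanSpace ℝ (Fin n)) : Prop :=
  p ∈ monoCone n ∧ ∀ w ∈ monoCone n, ‖y - p‖ ≤ ‖y - w‖

/-- A random vector is exchangeable if its law is invariant under coordinate
permutations. -/
def Exchangeable {n : ℕ} {Ω : Type*} [MeasurableSpace Ω] (μ : Measure Ω)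
    (ε : Ω → EuclideanSpace ℝ (Fin n)) : Prop :=
  ∀ τ : Equiv.Perm (Fin n),
    Measure.map (fun ω => (WithLp.toLp 2 (fun i => ε ω (τ i)) : EuclideanSpace ℝ (Fin n))) μ =
      Measure.map ε μ

open Finset

namespace BlindAux

variable {n : ℕ}


/-! ### Generic summation lemmas -/

theorem abel_tele (a b : ℕ → ℝ) (N : ℕ) :
    ∑ m ∈ range N, (a (m+1) - a m) * b m =
      a N * b N - a 0 * b 0 - ∑ m ∈ range N, a (m+1) * (b (m+1) - b m) := by
  have h : ∀ m, (a (m+1) - a m) * b m =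
      (a (m+1) * b (m+1) - a m * b m) - a (m+1) * (b (m+1) - b m) := by intro m; ring
  simp_rw [h]
  rw [Finset.sum_sub_distrib, Finset.sum_range_sub (fun m => a m * b m)]

theorem abel_nonneg (c δ : ℕ → ℝ) (k : ℕ)
    (hmono : ∀ i j, i ≤ j → j < k → c j ≤ c i)
    (hpos : ∀ i, i < k → 0 ≤ c i)
    (hps : ∀ j, j ≤ k → 0 ≤ ∑ i ∈ range j, δ i) :
    0 ≤ ∑ i ∈ range k, c i * δ i := by
  induction k generalizing c with
  | zero => simp
  | succ k ih =>
    have h1 : 0 ≤ ∑ i ∈ range k, (c i - c k) * δ i := by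
      apply ih
      · intro i j hij hj; have := hmono i j hij (by omega); linarith
      · intro i hi; have := hmono i k (by omega) (by omega); linarith
      · intro j hj; exact hps j (by omega)
    have h2 : 0 ≤ c k * ∑ i ∈ range (k+1), δ i :=
      mul_nonneg (hpos k (by omega)) (hps (k+1) le_rfl)
    have key : ∑ i ∈ range (k+1), c i * δ i =
        (∑ i ∈ range k, (c i - c k) * δ i) + c k * ∑ i ∈ range (k+1), δ i := by
      rw [Finset.sum_range_succ (fun i => c i * δ i), Finset.sum_range_succ δ]
      simp_rw [sub_mul]
      rw [Finset.sum_sub_distrib, mul_add, Finset.mul_sum]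
      ring
    rw [key]; linarith

/-! ### Subgradient of a convex monotone function -/

theorem exists_subgrad (U : ℝ → ℝ) (hU : Monotone U) (hUc : ConvexOn ℝ Set.univ U) :
    ∃ g : ℝ → ℝ, Monotone g ∧ (∀ x, 0 ≤ g x) ∧ ∀ x w, U x + g x * (w - x) ≤ U w := by
  classical
  set S : ℝ → Set ℝ := fun x => (fun t => (U (x + t) - U x) / t) '' Set.Ioi 0 with hS
  have hne : ∀ x, (S x).Nonempty := fun x => ⟨_, ⟨1, by norm_num, rfl⟩⟩
  have hbdd : ∀ x, BddBelow (S x) := by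
    intro x
    refine ⟨U x - U (x - 1), ?_⟩
    rintro z ⟨t, ht, rfl⟩
    have ht' : (0:ℝ) < t := ht
    have := hUc.slope_mono_adjacent (Set.mem_univ (x-1)) (Set.mem_univ (x+t))
      (by linarith : x - 1 < x) (by linarith : x < x + t)
    have e1 : x - (x-1) = 1 := by ring
    have e2 : x + t - x = t := by ring
    rw [e1, e2] at this
    simpa using this
  set g : ℝ → ℝ := fun x => sInf (S x) with hg
  have hmem : ∀ x t, 0 < t → g x ≤ (U (x + t) - U x) / t := by
    intro x t ht; exact csInf_le (hbdd x) ⟨t, ht, rfl⟩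
  have hlb : ∀ x L, (∀ t, 0 < t → L ≤ (U (x + t) - U x) / t) → L ≤ g x := by
    intro x L hL
    apply le_csInf (hne x)
    rintro z ⟨t, ht, rfl⟩; exact hL t ht
  refine ⟨g, ?_, ?_, ?_⟩
  · -- monotone
    intro x x' hxx'
    rcases eq_or_lt_of_le hxx' with rfl | hlt
    · exact le_rfl
    apply hlb
    intro t ht
    have h1 : g x ≤ (U (x + (x' - x + t)) - U x) / (x' - x + t) :=
      hmem x _ (by linarith)
    have e1 : x + (x' - x + t) = x' + t := by ring
    have e1' : x' - x + t = x' + t - x := by ring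
    rw [e1, e1'] at h1
    have h2 : (U (x' + t) - U x) / (x' + t - x) ≤ (U (x' + t) - U x') / (x' + t - x') := by
      have hne1 : x ≠ x'+t := by intro hc; rw [hc] at hlt; linarith
      have hne2 : x' ≠ x'+t := by intro hc; nlinarith [congrArg (· - x') hc]
      have := hUc.secant_mono (Set.mem_univ (x'+t)) (Set.mem_univ x) (Set.mem_univ x')
        hne1 hne2 hxx'
      -- this : (U x - U (x'+t))/(x - (x'+t)) ≤ (U x' - U (x'+t))/(x' - (x'+t))
      have ex : (U x - U (x'+t))/(x - (x'+t)) = (U (x'+t) - U x) / (x' + t - x) := by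
        rw [← neg_div_neg_eq]; ring_nf
      have ey : (U x' - U (x'+t))/(x' - (x'+t)) = (U (x'+t) - U x') / (x' + t - x') := by
        rw [← neg_div_neg_eq]; ring_nf
      rw [ex, ey] at this; exact this
    have e2 : x' + t - x' = t := by ring
    rw [e2] at h2
    calc g x ≤ (U (x' + t) - U x) / (x' + t - x) := h1
      _ ≤ (U (x' + t) - U x') / t := h2
  · -- nonneg
    intro x
    apply hlb
    intro t ht
    have h1 : U x ≤ U (x + t) := hU (by linarith)
    apply div_nonneg (by linarith) (le_of_lt ht)
  · -- subgradient inequality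
    intro x w
    rcases lt_trichotomy w x with hwx | rfl | hxw
    · -- w < x
      have key : (U x - U w) / (x - w) ≤ g x := by
        apply hlb
        intro t ht
        have := hUc.slope_mono_adjacent (Set.mem_univ w) (Set.mem_univ (x+t)) hwx
          (by linarith : x < x + t)
        have e2 : x + t - x = t := by ring
        rw [e2] at this; exact this
      have hpos : (0:ℝ) < x - w := by linarith
      rw [div_le_iff₀ hpos] at key
      nlinarith
    · simp
    · -- x < w
      have key : g x ≤ (U (x + (w - x)) - U x) / (w - x) := hmem x _ (by linarith)
      have e1 : x + (w - x) = w := by ring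
      rw [e1] at key
      have hpos : (0:ℝ) < w - x := by linarith
      rw [le_div_iff₀ hpos] at key
      linarith

/-! ### Tomić majorization lemma -/

theorem tomic (U : ℝ → ℝ) (hU : Monotone U) (hUc : ConvexOn ℝ Set.univ U)
    (k : ℕ) (x y : ℕ → ℝ)
    (hx : ∀ i j, i ≤ j → j < k → x j ≤ x i)
    (hps : ∀ j, j ≤ k → ∑ i ∈ range j, x i ≤ ∑ i ∈ range j, y i) :
    ∑ i ∈ range k, U (x i) ≤ ∑ i ∈ range k, U (y i) := by
  obtain ⟨g, hgmono, hgpos, hsub⟩ := exists_subgrad U hU hUc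
  have key : 0 ≤ ∑ i ∈ range k, g (x i) * (y i - x i) := by
    apply abel_nonneg
    · intro i j hij hj; exact hgmono (hx i j hij hj)
    · intro i _; exact hgpos (x i)
    · intro j hj
      rw [Finset.sum_sub_distrib]
      linarith [hps j hj]
  have hterm : ∀ i ∈ range k, U (x i) + g (x i) * (y i - x i) ≤ U (y i) :=
    fun i _ => hsub (x i) (y i)
  have := Finset.sum_le_sum hterm
  rw [Finset.sum_add_distrib] at this
  linarith




/-- Extension of a `Fin n` vector to `ℕ` by zero. -/
def ext (n : ℕ) (y : Fin n → ℝ) (i : ℕ) : ℝ := if h : i < n then y ⟨i, h⟩ else 0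

/-- Partial sums. -/
def psum (n : ℕ) (y : Fin n → ℝ) (m : ℕ) : ℝ := ∑ i ∈ range m, ext n y i

theorem ext_lt (y : Fin n → ℝ) {i : ℕ} (h : i < n) : ext n y i = y ⟨i, h⟩ := dif_pos h

theorem ext_ge (y : Fin n → ℝ) {i : ℕ} (h : n ≤ i) : ext n y i = 0 := dif_neg (by omega)

theorem psum_zero (y : Fin n → ℝ) : psum n y 0 = 0 := by simp [psum]

theorem psum_succ (y : Fin n → ℝ) (m : ℕ) : psum n y (m+1) = psum n y m + ext n y m :=
  Finset.sum_range_succ _ m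

theorem psum_filter (y : Fin n → ℝ) (m : ℕ) :
    psum n y m = ∑ i ∈ univ.filter (fun i : Fin n => (i : ℕ) < m), y i := by
  induction m with
  | zero => simp [psum_zero]
  | succ m ih =>
    rw [psum_succ, ih]
    by_cases hm : m < n
    · rw [ext_lt y hm]
      have hsplit : (univ.filter (fun i : Fin n => (i : ℕ) < m + 1)) =
          insert (⟨m, hm⟩ : Fin n) (univ.filter (fun i : Fin n => (i : ℕ) < m)) := by
        ext i
        simp only [mem_filter, mem_univ, true_and, mem_insert]
        constructor
        · intro h
          rcases Nat.lt_succ_iff_lt_or_eq.mp h with h' | h'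
          · exact Or.inr h'
          · exact Or.inl (Fin.ext h')
        · rintro (rfl | h)
          · simp
          · omega
      rw [hsplit, Finset.sum_insert (by simp)]
      ring
    · rw [ext_ge y (by omega)]
      have : ∀ i : Fin n, ((i : ℕ) < m + 1) = ((i : ℕ) < m) := by
        intro i; have := i.isLt; simp only [eq_iff_iff]; omega
      simp_rw [this]
      ring

theorem psum_stable (y : Fin n → ℝ) {m : ℕ} (h : n ≤ m) : psum n y m = psum n y n := by
  induction m with
  | zero => have : n = 0 := by omega
            subst this; rfl
  | succ m ih =>
    rcases Nat.lt_or_ge n (m+1) with h' | h'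
    · rw [psum_succ, ext_ge y (by omega), ih (by omega)]; ring
    · have heq : n = m + 1 := by omega
      subst heq; rfl

theorem psum_total (y : Fin n → ℝ) : psum n y n = ∑ i, y i := by
  rw [psum_filter]
  apply Finset.sum_congr _ (fun _ _ => rfl)
  apply Finset.filter_true_of_mem
  intro i _; exact i.isLt

theorem psum_sub (y z : Fin n → ℝ) (m : ℕ) :
    psum n (fun i => y i - z i) m = psum n y m - psum n z m := by
  simp only [psum_filter]
  rw [Finset.sum_sub_distrib]

theorem ext_sub (y z : Fin n → ℝ) (m : ℕ) :
    ext n (fun i => y i - z i) m = ext n y m - ext n z m := by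
  unfold ext; split <;> simp

theorem ext_psum (y : Fin n → ℝ) (m : ℕ) : ext n y m = psum n y (m+1) - psum n y m := by
  rw [psum_succ]; ring




def Q (n : ℕ) (u : Fin n → ℝ) : ℝ := ∑ i, (u i)^2

def dot (n : ℕ) (u v : Fin n → ℝ) : ℝ := ∑ i, u i * v i

theorem Q_nonneg (u : Fin n → ℝ) : 0 ≤ Q n u :=
  Finset.sum_nonneg fun i _ => sq_nonneg _

theorem norm_sqrtQ (x : EuclideanSpace ℝ (Fin n)) : ‖x‖ = Real.sqrt (Q n (fun i => x i)) := by
  rw [EuclideanSpace.norm_eq]; congr 1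
  apply Finset.sum_congr rfl; intro i _; rw [Real.norm_eq_abs, sq_abs]

theorem Q_le_of_norm_le {x y : EuclideanSpace ℝ (Fin n)} (h : ‖x‖ ≤ ‖y‖) :
    Q n (fun i => x i) ≤ Q n (fun i => y i) := by
  rw [norm_sqrtQ, norm_sqrtQ] at h
  exact (Real.sqrt_le_sqrt_iff (Q_nonneg _)).mp h

/-- The fundamental variational inequality for the isotonic projection. -/
theorem var_ineq (y p : EuclideanSpace ℝ (Fin n)) (hproj : IsIsoProj y p)
    (w : EuclideanSpace ℝ (Fin n)) (hw : w ∈ monoCone n) :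
    dot n (fun i => y i - p i) (fun i => w i - p i) ≤ 0 := by
  by_contra hc
  push_neg at hc
  set c : ℝ := dot n (fun i => y i - p i) (fun i => w i - p i) with hcdef
  set Qw : ℝ := Q n (fun i => w i - p i) with hQw
  have hQw0 : 0 ≤ Qw := Q_nonneg _
  set t : ℝ := min 1 (c / (Qw + 1)) with ht
  have ht0 : 0 < t := by
    apply lt_min one_pos
    apply div_pos hc (by linarith)
  have ht1 : t ≤ 1 := min_le_left _ _
  have htc : t * (Qw + 1) ≤ c := by
    have : t ≤ c / (Qw + 1) := min_le_right _ _
    rw [le_div_iff₀ (by linarith)] at this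
    exact this
  -- the competitor
  set wt : EuclideanSpace ℝ (Fin n) := WithLp.toLp 2 (fun i => p i + t * (w i - p i) : Fin n → ℝ) with hwt
  have hwtK : wt ∈ monoCone n := by
    intro i j hij
    have h1 : p j ≤ p i := hproj.1 i j hij
    have h2 : w j ≤ w i := hw i j hij
    show p j + t * (w j - p j) ≤ p i + t * (w i - p i)
    nlinarith
  have hmin := hproj.2 wt hwtK
  have hQle := Q_le_of_norm_le hmin
  have hexp : ∀ i : Fin n, (y - wt) i = (y i - p i) - t * (w i - p i) := by
    intro i; show y i - wt i = _
    show y i - (p i + t * (w i - p i)) = _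
    ring
  have hQwt : Q n (fun i => (y - wt) i) =
      Q n (fun i => (y - p) i) - 2 * t * c + t^2 * Qw := by
    simp only [hexp]
    have hyp : ∀ i : Fin n, (y - p) i = y i - p i := fun i => rfl
    simp only [hyp]
    rw [hcdef, hQw]
    unfold Q dot
    beta_reduce
    rw [Finset.mul_sum, Finset.mul_sum, ← Finset.sum_sub_distrib, ← Finset.sum_add_distrib]
    exact Finset.sum_congr rfl fun i _ => by ring
  rw [hQwt] at hQle
  -- contradiction
  nlinarith

theorem cone_add {u v : EuclideanSpace ℝ (Fin n)} (hu : u ∈ monoCone n) (hv : v ∈ monoCone n) :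
    (WithLp.toLp 2 (fun i => u i + v i : Fin n → ℝ) : EuclideanSpace ℝ (Fin n)) ∈ monoCone n := by
  intro i j hij
  have := hu i j hij; have := hv i j hij
  show u j + v j ≤ u i + v i
  linarith

theorem cone_smul {u : EuclideanSpace ℝ (Fin n)} (hu : u ∈ monoCone n) {c : ℝ} (hc : 0 ≤ c) :
    (WithLp.toLp 2 (fun i => c * u i : Fin n → ℝ) : EuclideanSpace ℝ (Fin n)) ∈ monoCone n := by
  intro i j hij
  have := hu i j hij
  show c * u j ≤ c * u i
  nlinarith

/-- For every cone element, `⟪y - p, w⟫ ≤ 0`. -/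
theorem dot_cone_le (y p : EuclideanSpace ℝ (Fin n)) (hproj : IsIsoProj y p)
    (w : EuclideanSpace ℝ (Fin n)) (hw : w ∈ monoCone n) :
    dot n (fun i => y i - p i) (fun i => w i) ≤ 0 := by
  have := var_ineq y p hproj (WithLp.toLp 2 (fun i => p i + w i : Fin n → ℝ)) (cone_add hproj.1 hw)
  convert this using 2
  funext i
  show w i = (p i + w i) - p i
  ring

theorem dot_p_eq (y p : EuclideanSpace ℝ (Fin n)) (hproj : IsIsoProj y p) :
    dot n (fun i => y i - p i) (fun i => p i) = 0 := by
  have h1 : dot n (fun i => y i - p i) (fun i => p i) ≤ 0 :=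
    dot_cone_le y p hproj p hproj.1
  have h2 := var_ineq y p hproj (WithLp.toLp 2 (fun i => (1/2 : ℝ) * p i : Fin n → ℝ))
    (cone_smul hproj.1 (by norm_num))
  have h3 : dot n (fun i => y i - p i) (fun i => (1/2:ℝ) * p i - p i)
      = -(1/2) * dot n (fun i => y i - p i) (fun i => p i) := by
    unfold dot
    beta_reduce
    rw [Finset.mul_sum]
    exact Finset.sum_congr rfl fun i _ => by ring
  have h4 : dot n (fun i => y i - p i) (fun i => (WithLp.toLp 2 (fun i => (1/2:ℝ) * p i) : EuclideanSpace ℝ (Fin n)) i - p i)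
      = dot n (fun i => y i - p i) (fun i => (1/2:ℝ) * p i - p i) := rfl
  rw [h4, h3] at h2
  linarith


/-! ### Structure facts about the isotonic projection -/

/-- The step vector `1_{i < m}` is in the cone. -/
theorem step_mem (m : ℕ) :
    (WithLp.toLp 2 (fun i => if (i : ℕ) < m then (1:ℝ) else 0 : Fin n → ℝ) : EuclideanSpace ℝ (Fin n))
      ∈ monoCone n := by
  intro i j hij
  show (if (j:ℕ) < m then (1:ℝ) else 0) ≤ (if (i:ℕ) < m then (1:ℝ) else 0)
  have hij' : (i:ℕ) ≤ (j:ℕ) := hij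
  by_cases hj : (j:ℕ) < m
  · rw [if_pos hj, if_pos (by omega)]
  · rw [if_neg hj]; split <;> norm_num

theorem const_mem (c : ℝ) :
    (WithLp.toLp 2 (fun _ => c : Fin n → ℝ) : EuclideanSpace ℝ (Fin n)) ∈ monoCone n :=
  fun _ _ _ => le_rfl

/-- F2 : partial sums of the projection dominate those of `y`. -/
theorem psum_le_proj (y p : EuclideanSpace ℝ (Fin n)) (hproj : IsIsoProj y p) (m : ℕ) :
    psum n (fun i => y i) m ≤ psum n (fun i => p i) m := by
  have h := dot_cone_le y p hproj _ (step_mem m)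
  unfold dot at h
  beta_reduce at h
  simp only [WithLp.ofLp_toLp] at h
  have hcalc : ∑ i : Fin n, (y i - p i) * (if (i:ℕ) < m then (1:ℝ) else 0)
      = psum n (fun i => y i) m - psum n (fun i => p i) m := by
    rw [psum_filter, psum_filter, ← Finset.sum_sub_distrib, Finset.sum_filter]
    exact Finset.sum_congr rfl fun i _ => by split <;> ring
  rw [hcalc] at h
  linarith

/-- F3 : total sums agree. -/
theorem psum_total_eq (y p : EuclideanSpace ℝ (Fin n)) (hproj : IsIsoProj y p) :
    psum n (fun i => p i) n = psum n (fun i => y i) n := by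
  have h1 := dot_cone_le y p hproj _ (const_mem 1)
  have h2 := dot_cone_le y p hproj _ (const_mem (-1))
  unfold dot at h1 h2
  beta_reduce at h1 h2
  simp only [WithLp.ofLp_toLp] at h1 h2
  have e1 : ∑ i : Fin n, (y i - p i) * (1:ℝ)
      = psum n (fun i => y i) n - psum n (fun i => p i) n := by
    rw [psum_total, psum_total, ← Finset.sum_sub_distrib]
    exact Finset.sum_congr rfl fun i _ => by ring
  have e2 : ∑ i : Fin n, (y i - p i) * (-1:ℝ)
      = -(∑ i : Fin n, (y i - p i) * (1:ℝ)) := by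
    rw [← Finset.sum_neg_distrib]
    exact Finset.sum_congr rfl fun i _ => by ring
  rw [e1] at h1
  rw [e2, e1] at h2
  linarith

/-- F4 : complementarity. -/
theorem proj_compl (y p : EuclideanSpace ℝ (Fin n)) (hproj : IsIsoProj y p)
    (m : ℕ) (hm : m + 1 < n)
    (hlt : psum n (fun i => y i) (m+1) < psum n (fun i => p i) (m+1)) :
    ext n (fun i => p i) m = ext n (fun i => p i) (m+1) := by
  classical
  set Y : ℕ → ℝ := fun j => psum n (fun i => y i) j with hY
  set Pp : ℕ → ℝ := fun j => psum n (fun i => p i) j with hPp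
  set D : ℕ → ℝ := fun j => Y j - Pp j with hD
  have hD_nonpos : ∀ j, D j ≤ 0 := fun j => by
    have := psum_le_proj y p hproj j; simp only [hD, hY, hPp]; linarith
  have hDn : D n = 0 := by
    simp only [hD, hY, hPp]; have := psum_total_eq y p hproj; linarith
  -- dot d p = 0 gives the complementarity via Abel summation
  have hdot := dot_p_eq y p hproj
  unfold dot at hdot
  have hconv : ∑ i : Fin n, (fun i => y i - p i) i * (fun i => p i) i
      = ∑ j ∈ range n, (D (j+1) - D j) * ext n (fun i => p i) j := by
    rw [Fin.sum_univ_eq_sum_range (fun j => (D (j+1) - D j) * ext n (fun i => p i) j) n |>.symm]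
    apply Finset.sum_congr rfl
    intro i _
    have hi : (i:ℕ) < n := i.isLt
    have eD : D ((i:ℕ)+1) - D (i:ℕ) = y i - p i := by
      simp only [hD, hY, hPp, psum_succ]
      rw [ext_lt (fun i => y i) hi, ext_lt (fun i => p i) hi]
      simp only [Fin.eta]
      ring
    rw [eD, ext_lt (fun i => p i) hi]
  rw [hconv] at hdot
  rw [abel_tele D (ext n (fun i => p i)) n] at hdot
  have hDz : D 0 = 0 := by simp [hD, hY, hPp, psum_zero]
  have hextn : ext n (fun i => p i) n = 0 := ext_ge _ le_rfl
  rw [hDn, hDz, hextn] at hdot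
  simp only [mul_zero, zero_mul, zero_sub, sub_zero, zero_eq_neg] at hdot
  -- each term of the (negated) sum is nonnegative, and the sum vanishes
  have hterm_nonneg : ∀ j ∈ range n,
      0 ≤ D (j+1) * (ext n (fun i => p i) (j+1) - ext n (fun i => p i) j) := by
    intro j hj
    rw [mem_range] at hj
    rcases Nat.lt_or_ge (j+1) n with hj1 | hj1
    · have hmono : ext n (fun i => p i) (j+1) ≤ ext n (fun i => p i) j := by
        rw [ext_lt _ hj1, ext_lt _ (by omega : j < n)]
        exact hproj.1 ⟨j, by omega⟩ ⟨j+1, hj1⟩ (by simp [Fin.le_def])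
      have := hD_nonpos (j+1)
      nlinarith
    · have hjn : j + 1 = n := by omega
      rw [hjn, hDn, zero_mul]
  have hsum0 : ∑ j ∈ range n, D (j+1) * (ext n (fun i => p i) (j+1) - ext n (fun i => p i) j) = 0 := by
    linarith [hdot]
  have hall := (Finset.sum_eq_zero_iff_of_nonneg hterm_nonneg).mp hsum0
  have hterm := hall m (by rw [mem_range]; omega)
  have hDm : D (m+1) < 0 := by simp only [hD, hY, hPp]; linarith
  rcases mul_eq_zero.mp hterm with h | h
  · exact absurd h (ne_of_lt hDm)
  · linarith [h]

/-- Key comparison: cusum domination transfers to the isotonic projections. -/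
theorem psum_proj_mono (y z p q : EuclideanSpace ℝ (Fin n))
    (hpy : IsIsoProj y p) (hqz : IsIsoProj z q)
    (hyz : ∀ m, psum n (fun i => y i) m ≤ psum n (fun i => z i) m) :
    ∀ m, psum n (fun i => p i) m ≤ psum n (fun i => q i) m := by
  classical
  suffices hmain : ∀ m, m ≤ n → psum n (fun i => p i) m ≤ psum n (fun i => q i) m by
    intro m
    rcases le_or_gt m n with hm | hm
    · exact hmain m hm
    · rw [psum_stable _ (by omega : n ≤ m), psum_stable _ (by omega : n ≤ m)]
      exact hmain n le_rfl
  by_contra hc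
  push_neg at hc
  obtain ⟨m0, hm0n, hm0⟩ := hc
  set h : ℕ → ℝ := fun m => psum n (fun i => p i) m - psum n (fun i => q i) m with hh
  set s : Finset ℕ := Finset.range (n+1) with hs
  have hsne : s.Nonempty := ⟨0, by simp [hs]⟩
  set M : ℝ := s.sup' hsne h with hM
  have hm0s : m0 ∈ s := by simp [hs, Finset.mem_range]; omega
  have hMpos : 0 < M := by
    have h1 : h m0 ≤ M := Finset.le_sup' h hm0s
    have h2 : 0 < h m0 := by simp only [hh]; linarith
    linarith
  set t : Finset ℕ := s.filter (fun m => h m = M) with ht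
  have htne : t.Nonempty := by
    obtain ⟨mw, hmw, hmweq⟩ := Finset.exists_mem_eq_sup' hsne h
    exact ⟨mw, by rw [ht, Finset.mem_filter]; exact ⟨hmw, hmweq.symm⟩⟩
  set m : ℕ := t.max' htne with hmdef
  have hmt : m ∈ t := t.max'_mem htne
  have hms : m ∈ s := (Finset.mem_filter.mp hmt).1
  have hhm : h m = M := (Finset.mem_filter.mp hmt).2
  clear_value m
  have hm_le : m ≤ n := by
    rw [hs, Finset.mem_range] at hms; omega
  have h0 : h 0 = 0 := by simp [hh, psum_zero]
  have hmne0 : m ≠ 0 := by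
    intro he; rw [he, h0] at hhm; linarith
  have hmnen : m ≠ n := by
    intro he
    have e3 := psum_total_eq y p hpy
    have e4 := psum_le_proj z q hqz n
    have e5 := hyz n
    have hn0 : h n ≤ 0 := by simp only [hh]; linarith
    rw [he] at hhm
    linarith
  obtain ⟨m', rfl⟩ : ∃ m', m = m' + 1 := ⟨m - 1, by omega⟩
  have hmlt : m' + 1 < n := by omega
  by_cases hD : psum n (fun i => y i) (m'+1) < psum n (fun i => p i) (m'+1)
  · -- complementarity case
    have hcompl : ext n (fun i => p i) m' = ext n (fun i => p i) (m'+1) :=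
      proj_compl y p hpy m' hmlt hD
    have hq1 : ext n (fun i => q i) (m'+1) ≤ ext n (fun i => q i) m' := by
      rw [ext_lt _ (by omega : m' + 1 < n), ext_lt _ (by omega : m' < n)]
      exact hqz.1 ⟨m', by omega⟩ ⟨m'+1, by omega⟩ (by simp [Fin.le_def])
    have hle1 : h m' ≤ M := Finset.le_sup' h (by simp [hs, Finset.mem_range]; omega)
    have hle2 : h (m'+2) ≤ M := Finset.le_sup' h (by simp [hs, Finset.mem_range]; omega)
    have heq2 : h (m'+2) = M := by
      have a1 : psum n (fun i => p i) (m'+2) = psum n (fun i => p i) (m'+1) + ext n (fun i => p i) (m'+1) := psum_succ _ _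
      have a2 : psum n (fun i => p i) (m'+1) = psum n (fun i => p i) m' + ext n (fun i => p i) m' := psum_succ _ _
      have b1 : psum n (fun i => q i) (m'+2) = psum n (fun i => q i) (m'+1) + ext n (fun i => q i) (m'+1) := psum_succ _ _
      have b2 : psum n (fun i => q i) (m'+1) = psum n (fun i => q i) m' + ext n (fun i => q i) m' := psum_succ _ _
      have hMm : h (m'+1) = M := hhm
      simp only [hh] at hMm hle1 hle2 ⊢
      linarith
    have hmem2 : m'+2 ∈ t := by
      rw [ht, Finset.mem_filter]
      exact ⟨by simp [hs, Finset.mem_range]; omega, heq2⟩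
    have := t.le_max' _ hmem2
    rw [← hmdef] at this
    omega
  · push_neg at hD
    have e1 := psum_le_proj y p hpy (m'+1)
    have e2 := hyz (m'+1)
    have e3 := psum_le_proj z q hqz (m'+1)
    have : h (m'+1) ≤ 0 := by simp only [hh]; linarith
    rw [hhm] at this; linarith

/-! ### From cusum domination to utility-sum domination -/

theorem sumU_eq (U : ℝ → ℝ) (h : Fin n → ℝ) {k : ℕ} (hkn : k ≤ n) :
    ∑ i ∈ univ.filter (fun i : Fin n => (i : ℕ) < k), U (h i)
      = ∑ m ∈ range k, U (ext n h m) := by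
  rw [← psum_filter (fun i => U (h i)) k]
  unfold psum
  apply Finset.sum_congr rfl
  intro m hm
  rw [mem_range] at hm
  rw [ext_lt _ (by omega : m < n), ext_lt _ (by omega : m < n)]

theorem proj_sum_mono {k : ℕ} (hkn : k ≤ n)
    (U : ℝ → ℝ) (hU : Monotone U) (hUc : ConvexOn ℝ Set.univ U)
    (y y' p q : EuclideanSpace ℝ (Fin n))
    (hpy : IsIsoProj y p) (hqy' : IsIsoProj y' q)
    (hyy' : ∀ m, psum n (fun i => y i) m ≤ psum n (fun i => y' i) m) :
    ∑ i ∈ univ.filter (fun i : Fin n => (i : ℕ) < k), U (p i)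
      ≤ ∑ i ∈ univ.filter (fun i : Fin n => (i : ℕ) < k), U (q i) := by
  have hps := psum_proj_mono y y' p q hpy hqy' hyy'
  rw [sumU_eq U (fun i => p i) hkn, sumU_eq U (fun i => q i) hkn]
  apply tomic U hU hUc k (ext n (fun i => p i)) (ext n (fun i => q i))
  · intro i j hij hj
    rw [ext_lt _ (by omega : i < n), ext_lt _ (by omega : j < n)]
    exact hpy.1 ⟨i, by omega⟩ ⟨j, by omega⟩ (by simp [Fin.le_def]; omega)
  · intro j hj
    exact hps j

/-- Cusum domination under an adjacent sorting swap. -/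
theorem psum_swap_dom (r e : Fin n → ℝ) (a b : Fin n) (hab : (a:ℕ) < (b:ℕ)) (hr : r a ≤ r b) :
    ∀ m, psum n (fun i => r i + e i) m ≤ psum n (fun i => r (Equiv.swap a b i) + e i) m := by
  intro m
  have hne : a ≠ b := by intro h; rw [h] at hab; omega
  rw [psum_filter, psum_filter, ← sub_nonneg, ← Finset.sum_sub_distrib]
  have hfe : ∀ i : Fin n, (r (Equiv.swap a b i) + e i) - (r i + e i)
      = (if i = a then (r b - r a) else 0) + (if i = b then -(r b - r a) else 0) := by
    intro i
    by_cases hia : i = a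
    · subst hia
      rw [Equiv.swap_apply_left, if_pos rfl, if_neg hne]
      ring
    · by_cases hib : i = b
      · subst hib
        rw [Equiv.swap_apply_right, if_neg hia, if_pos rfl]
        ring
      · rw [Equiv.swap_apply_of_ne_of_ne hia hib, if_neg hia, if_neg hib]
        ring
  simp_rw [hfe]
  rw [Finset.sum_add_distrib, Finset.sum_ite_eq' _ a (fun _ => r b - r a),
    Finset.sum_ite_eq' _ b (fun _ => -(r b - r a))]
  simp only [mem_filter, mem_univ, true_and]
  by_cases hbm : (b:ℕ) < m
  · rw [if_pos hbm, if_pos (by omega : (a:ℕ) < m)]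
    linarith
  · rw [if_neg hbm]
    split
    · linarith
    · linarith

/-! ### Inversions -/

def inv (r : Fin n → ℝ) : ℕ :=
  ((univ : Finset (Fin n × Fin n)).filter (fun q => q.1 < q.2 ∧ r q.1 < r q.2)).card

theorem inv_zero_antitone (r : Fin n → ℝ) (h : inv r = 0) :
    ∀ i j : Fin n, i ≤ j → r j ≤ r i := by
  intro i j hij
  rcases eq_or_lt_of_le hij with rfl | hlt
  · exact le_rfl
  by_contra hc
  push_neg at hc
  have hmem : (i, j) ∈ (univ : Finset (Fin n × Fin n)).filter
      (fun q => q.1 < q.2 ∧ r q.1 < r q.2) := by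
    simp only [Finset.mem_filter, Finset.mem_univ, true_and]
    exact ⟨hlt, hc⟩
  unfold inv at h
  rw [Finset.card_eq_zero] at h
  rw [h] at hmem
  simp at hmem

theorem exists_adj (r : Fin n → ℝ) (h : inv r ≠ 0) :
    ∃ a b : Fin n, (a:ℕ) + 1 = (b:ℕ) ∧ r a < r b := by
  by_contra hc
  push_neg at hc
  have hadj : ∀ m (hm : m + 1 < n), r ⟨m+1, hm⟩ ≤ r ⟨m, by omega⟩ := by
    intro m hm
    exact hc ⟨m, by omega⟩ ⟨m+1, hm⟩ (by simp)
  have hanti : ∀ i j : Fin n, i ≤ j → r j ≤ r i := by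
    have key : ∀ d (i j : Fin n), (j:ℕ) = (i:ℕ) + d → r j ≤ r i := by
      intro d
      induction d with
      | zero =>
        intro i j hji
        have : j = i := Fin.ext (by omega)
        subst this; exact le_rfl
      | succ d ih =>
        intro i j hji
        have hj : (i:ℕ) + d < n := by have := j.isLt; omega
        have mid : r j ≤ r ⟨(i:ℕ) + d, hj⟩ := by
          have hjeq : j = ⟨(i:ℕ)+d+1, by have := j.isLt; omega⟩ :=
            Fin.ext (show (j:ℕ) = (i:ℕ)+d+1 by omega)
          rw [hjeq]
          exact hadj ((i:ℕ)+d) (by have := j.isLt; omega)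
        exact le_trans mid (ih i ⟨(i:ℕ)+d, hj⟩ rfl)
    intro i j hij
    exact key ((j:ℕ) - (i:ℕ)) i j (by have : (i:ℕ) ≤ (j:ℕ) := hij; omega)
  apply h
  unfold inv
  rw [Finset.card_eq_zero, Finset.filter_eq_empty_iff]
  intro q _
  rintro ⟨h1, h2⟩
  exact absurd h2 (not_lt.mpr (hanti q.1 q.2 (le_of_lt h1)))

theorem swap_lt_of {a b x y : Fin n} (hab : (a:ℕ) + 1 = (b:ℕ)) (hxy : x < y)
    (hne : ¬(x = a ∧ y = b)) : Equiv.swap a b x < Equiv.swap a b y := by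
  have hxy' : (x:ℕ) < (y:ℕ) := hxy
  have hab' : a ≠ b := by intro h; rw [h] at hab; omega
  by_cases hxa : x = a
  · subst hxa
    have hyb : y ≠ b := fun h => hne ⟨rfl, h⟩
    have hya : y ≠ x := (ne_of_gt hxy)
    rw [Equiv.swap_apply_left, Equiv.swap_apply_of_ne_of_ne hya hyb]
    show (b:ℕ) < (y:ℕ)
    have h1 : (y:ℕ) ≠ (b:ℕ) := fun h => hyb (Fin.ext h)
    omega
  · by_cases hxb : x = b
    · subst hxb
      have hya : y ≠ a := by intro h; subst h; omega
      have hyb : y ≠ x := (ne_of_gt hxy)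
      rw [Equiv.swap_apply_right, Equiv.swap_apply_of_ne_of_ne hya hyb]
      show (a:ℕ) < (y:ℕ)
      omega
    · by_cases hya : y = a
      · subst hya
        rw [Equiv.swap_apply_of_ne_of_ne hxa hxb, Equiv.swap_apply_left]
        show (x:ℕ) < (b:ℕ)
        omega
      · by_cases hyb : y = b
        · subst hyb
          rw [Equiv.swap_apply_of_ne_of_ne hxa hxb, Equiv.swap_apply_right]
          show (x:ℕ) < (a:ℕ)
          have h1 : (x:ℕ) ≠ (a:ℕ) := fun h => hxa (Fin.ext h)
          omega
        · rw [Equiv.swap_apply_of_ne_of_ne hxa hxb, Equiv.swap_apply_of_ne_of_ne hya hyb]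
          exact hxy

theorem inv_swap_lt (r : Fin n → ℝ) (a b : Fin n) (hab : (a:ℕ) + 1 = (b:ℕ)) (hr : r a < r b) :
    inv (fun i => r (Equiv.swap a b i)) < inv r := by
  classical
  set s := Equiv.swap a b with hs
  set A := (univ : Finset (Fin n × Fin n)).filter (fun q => q.1 < q.2 ∧ r q.1 < r q.2) with hA
  set A' := (univ : Finset (Fin n × Fin n)).filter
      (fun q => q.1 < q.2 ∧ r (s q.1) < r (s q.2)) with hA'
  have hab' : a < b := by
    rw [Fin.lt_def]; omega
  have habA : (a, b) ∈ A := by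
    rw [hA, Finset.mem_filter]
    exact ⟨Finset.mem_univ _, hab', hr⟩
  have hcard : A'.card < A.card := by
    have hinj : Set.InjOn (fun q : Fin n × Fin n => (s q.1, s q.2)) A' := by
      intro u _ v _ huv
      simp only [Prod.mk.injEq] at huv
      exact Prod.ext (s.injective huv.1) (s.injective huv.2)
    have himsub : A'.image (fun q : Fin n × Fin n => (s q.1, s q.2)) ⊆ A.erase (a, b) := by
      intro u hu
      rw [Finset.mem_image] at hu
      obtain ⟨q, hq, rfl⟩ := hu
      rw [hA', Finset.mem_filter] at hq
      obtain ⟨-, hq1, hq2⟩ := hq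
      have hqne : ¬(q.1 = a ∧ q.2 = b) := by
        rintro ⟨h1, h2⟩
        rw [h1, h2] at hq2
        rw [hs] at hq2
        rw [Equiv.swap_apply_left, Equiv.swap_apply_right] at hq2
        linarith
      refine Finset.mem_erase.mpr ⟨?_, ?_⟩
      · intro hc
        simp only [Prod.mk.injEq] at hc
        have h1 : q.1 = s a := by rw [← hc.1]; rw [hs]; rw [Equiv.swap_apply_self]
        have h2 : q.2 = s b := by rw [← hc.2]; rw [hs]; rw [Equiv.swap_apply_self]
        rw [hs, Equiv.swap_apply_left] at h1
        rw [hs, Equiv.swap_apply_right] at h2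
        rw [h1, h2] at hq1
        exact absurd hq1 (not_lt.mpr (le_of_lt hab'))
      · rw [hA, Finset.mem_filter]
        exact ⟨Finset.mem_univ _, swap_lt_of hab hq1 hqne, hq2⟩
    calc A'.card = (A'.image (fun q : Fin n × Fin n => (s q.1, s q.2))).card :=
          (Finset.card_image_of_injOn hinj).symm
      _ ≤ (A.erase (a, b)).card := Finset.card_le_card himsub
      _ < A.card := Finset.card_erase_lt_of_mem habA
  exact hcard

/-! ### Two antitone rearrangements of each other are equal -/

theorem eq_of_antitone_perm (R : Fin n → ℝ) (τ : Equiv.Perm (Fin n))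
    (hR : ∀ i j : Fin n, i ≤ j → R j ≤ R i)
    (hr : ∀ i j : Fin n, i ≤ j → R (τ j) ≤ R (τ i)) :
    ∀ i, R (τ i) = R i := by
  classical
  set r : Fin n → ℝ := fun i => R (τ i) with hrdef
  have hcard : ∀ c : ℝ, (univ.filter (fun i : Fin n => c ≤ r i)).card
      = (univ.filter (fun i : Fin n => c ≤ R i)).card := by
    intro c
    apply Finset.card_bij (fun i _ => τ i)
    · intro i hi
      rw [Finset.mem_filter] at hi ⊢
      exact ⟨Finset.mem_univ _, hi.2⟩
    · intro u _ v _ huv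
      exact τ.injective huv
    · intro j hj
      refine ⟨τ.symm j, ?_, by simp⟩
      rw [Finset.mem_filter] at hj ⊢
      refine ⟨Finset.mem_univ _, ?_⟩
      show c ≤ R (τ (τ.symm j))
      rw [Equiv.apply_symm_apply]
      exact hj.2
  -- membership in a down-set determined by cardinality
  have hdsetR : ∀ (v : Fin n → ℝ), (∀ i j : Fin n, i ≤ j → v j ≤ v i) → ∀ (c : ℝ) (i : Fin n),
      c ≤ v i ↔ (i : ℕ) < (univ.filter (fun i : Fin n => c ≤ v i)).card := by
    intro v hv c i
    constructor
    · intro hi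
      have hsub : Finset.Iic i ⊆ univ.filter (fun j : Fin n => c ≤ v j) := by
        intro j hj
        rw [Finset.mem_Iic] at hj
        rw [Finset.mem_filter]
        exact ⟨Finset.mem_univ _, le_trans hi (hv j i hj)⟩
      have hcard2 := Finset.card_le_card hsub
      have hIic : (Finset.Iic i).card = (i:ℕ) + 1 := by simp
      omega
    · intro hi
      by_contra hc
      push_neg at hc
      have hsub : univ.filter (fun j : Fin n => c ≤ v j) ⊆ Finset.Iio i := by
        intro j hj
        rw [Finset.mem_filter] at hj
        rw [Finset.mem_Iio]
        by_contra hj'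
        push_neg at hj'
        exact absurd (le_trans hj.2 (hv i j hj')) (not_le.mpr hc)
      have hcard2 := Finset.card_le_card hsub
      have hIio : (Finset.Iio i).card = (i:ℕ) := by simp
      omega
  intro i
  have h1 : R (τ i) ≤ R i := by
    have := (hdsetR r hr (r i) i).mp le_rfl
    rw [hcard (r i)] at this
    exact (hdsetR R hR (r i) i).mpr this
  have h2 : R i ≤ R (τ i) := by
    have := (hdsetR R hR (R i) i).mp le_rfl
    rw [← hcard (R i)] at this
    exact (hdsetR r hr (R i) i).mpr this
  exact le_antisymm h1 h2

theorem base_eq (R : Fin n → ℝ) (hR : ∀ i j : Fin n, i ≤ j → R j ≤ R i)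
    (r : Fin n → ℝ) (τ : Equiv.Perm (Fin n)) (hrτ : ∀ i, r i = R (τ i)) (h0 : inv r = 0) :
    ∀ i, r i = R i := by
  have hanti := inv_zero_antitone r h0
  have hr' : ∀ i j : Fin n, i ≤ j → R (τ j) ≤ R (τ i) := by
    intro i j hij
    rw [← hrτ i, ← hrτ j]
    exact hanti i j hij
  intro i
  rw [hrτ i]
  exact eq_of_antitone_perm R τ hR hr' i

theorem chain {k : ℕ} (hkn : k ≤ n)
    (P : EuclideanSpace ℝ (Fin n) → EuclideanSpace ℝ (Fin n))
    (hP : ∀ v, IsIsoProj v (P v))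
    (U : ℝ → ℝ) (hU : Monotone U) (hUc : ConvexOn ℝ Set.univ U)
    (R : EuclideanSpace ℝ (Fin n)) (hR : ∀ i j : Fin n, i ≤ j → R j ≤ R i)
    (e : Fin n → ℝ) :
    ∀ N (r : Fin n → ℝ) (τ : Equiv.Perm (Fin n)), (∀ i, r i = R (τ i)) → inv r ≤ N →
      ∑ i ∈ univ.filter (fun i : Fin n => (i : ℕ) < k),
          U (P (WithLp.toLp 2 (fun i => r i + e i : Fin n → ℝ)) i)
        ≤ ∑ i ∈ univ.filter (fun i : Fin n => (i : ℕ) < k),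
          U (P (WithLp.toLp 2 (fun i => R i + e i : Fin n → ℝ)) i) := by
  intro N
  induction N with
  | zero =>
    intro r τ hrτ hinv
    have heq := base_eq (fun i => R i) hR r τ hrτ (by omega)
    have : ((fun i => r i + e i : Fin n → ℝ)) = ((fun i => R i + e i : Fin n → ℝ)) := by
      funext i; rw [heq i]
    rw [this]
  | succ N ih =>
    intro r τ hrτ hinv
    rcases (by omega : inv r ≤ N ∨ inv r = N + 1) with h | h
    · exact ih r τ hrτ h
    · -- there is an adjacent inversion
      obtain ⟨a, b, hab, hrab⟩ := exists_adj r (by omega)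
      have hablt : (a:ℕ) < (b:ℕ) := by omega
      set r' : Fin n → ℝ := fun i => r (Equiv.swap a b i) with hr'
      have step1 : ∑ i ∈ univ.filter (fun i : Fin n => (i : ℕ) < k),
            U (P (WithLp.toLp 2 (fun i => r i + e i : Fin n → ℝ)) i)
          ≤ ∑ i ∈ univ.filter (fun i : Fin n => (i : ℕ) < k),
            U (P (WithLp.toLp 2 (fun i => r' i + e i : Fin n → ℝ)) i) := by
        apply proj_sum_mono hkn U hU hUc
          (WithLp.toLp 2 (fun i => r i + e i : Fin n → ℝ)) (WithLp.toLp 2 (fun i => r' i + e i : Fin n → ℝ))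
          _ _ (hP _) (hP _)
        exact psum_swap_dom r e a b hablt (le_of_lt hrab)
      have step2 : ∑ i ∈ univ.filter (fun i : Fin n => (i : ℕ) < k),
            U (P (WithLp.toLp 2 (fun i => r' i + e i : Fin n → ℝ)) i)
          ≤ ∑ i ∈ univ.filter (fun i : Fin n => (i : ℕ) < k),
            U (P (WithLp.toLp 2 (fun i => R i + e i : Fin n → ℝ)) i) := by
        apply ih r' ((Equiv.swap a b).trans τ)
        · intro i
          show r (Equiv.swap a b i) = R (τ (Equiv.swap a b i))
          exact hrτ _
        · have := inv_swap_lt r a b hab hrab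
          rw [← hr'] at this
          omega
      exact le_trans step1 step2


theorem key_pointwise {n k : ℕ} (hkn : k ≤ n)
    (P : EuclideanSpace ℝ (Fin n) → EuclideanSpace ℝ (Fin n))
    (hP : ∀ v, IsIsoProj v (P v))
    (U : ℝ → ℝ) (hU : Monotone U) (hUc : ConvexOn ℝ Set.univ U)
    (R : EuclideanSpace ℝ (Fin n)) (hR : ∀ i j : Fin n, i ≤ j → R j ≤ R i)
    (σ : Equiv.Perm (Fin n)) (e : EuclideanSpace ℝ (Fin n)) :
    ∑ i ∈ univ.filter (fun i : Fin n => (i : ℕ) < k),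
        U (P (WithLp.toLp 2 (fun i => R (σ i) + e i) : EuclideanSpace ℝ (Fin n)) i)
      ≤ ∑ i ∈ univ.filter (fun i : Fin n => (i : ℕ) < k), U (P (R + e) i) := by
  exact chain hkn P hP U hU hUc R hR (fun i => e i)
    (inv (fun i => R (σ i))) (fun i => R (σ i)) σ (fun _ => rfl) le_rfl

end BlindAux

/-- In the Blind Case with quota `k`, reporting the true ranking maximizes the
expected utility, for any nondecreasing convex utility `U`. -/
theorem blind_case_quota_k_truthfulness
    {n k : ℕ} (hk1 : 1 ≤ k) (hkn : k ≤ n) {Ω : Type*} [MeasurableSpace Ω]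
    (μ : Measure Ω) [IsProbabilityMeasure μ]
    (ε : Ω → EuclideanSpace ℝ (Fin n)) (hε : Exchangeable μ ε)
    (R : EuclideanSpace ℝ (Fin n)) (hR : ∀ i j : Fin n, i ≤ j → R j ≤ R i)
    (σ : Equiv.Perm (Fin n))
    (P : EuclideanSpace ℝ (Fin n) → EuclideanSpace ℝ (Fin n))
    (hP : ∀ v, IsIsoProj v (P v))
    (U : ℝ → ℝ) (hU : Monotone U) (hUc : ConvexOn ℝ Set.univ U)
    (hint_true : Integrable (fun ω =>
      ∑ i ∈ Finset.univ.filter (fun i : Fin n => (i : ℕ) < k),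
        U (P (R + ε ω) i)) μ)
    (hint_perm : Integrable (fun ω =>
      ∑ i ∈ Finset.univ.filter (fun i : Fin n => (i : ℕ) < k),
        U (P (WithLp.toLp 2 (fun i => R (σ i) + ε ω i) : EuclideanSpace ℝ (Fin n)) i)) μ) :
    ∫ ω, ∑ i ∈ Finset.univ.filter (fun i : Fin n => (i : ℕ) < k),
        U (P (WithLp.toLp 2 (fun i => R (σ i) + ε ω i) : EuclideanSpace ℝ (Fin n)) i) ∂μ ≤
      ∫ ω, ∑ i ∈ Finset.univ.filter (fun i : Fin n => (i : ℕ) < k),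
        U (P (R + ε ω) i) ∂μ := by
  apply integral_mono hint_perm hint_true
  intro ω
  exact BlindAux.key_pointwise hkn P hP U hU hUc R hR σ (ε ω)
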